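/- Let w be metric weights on a finite set 𝒩 of N points with N even. Then every perfect matching M of 𝒩 satisfies w(M) ≤ (2/N)·Σ_{ {x,y} ⊆ 𝒩 } w(x,y). Consequently, the maximum-weight perfect matching weighs at most twice the average weight of a uniformly random perfect matching of 𝒩; i.e., picking a perfect matching uniformly at random is a 2-approximation in expectation for the Maximum Weighted Matching problem under metric weights. -/

import Mathlib

open Finset

theorem stmt_7 {V : Type*} [Fintype V] [DecidableEq V]
    (N : ℕ) (hN : Fintype.card V = N) (heven : Even N)
    (w : V → V → ℝ)
    (hnonneg : ∀ x y, 0 ≤ w x y)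
    (hsymm : ∀ x y, w x y = w y x)
    (hmetric : ∀ x y z : V, x ≠ y → y ≠ z → x ≠ z → w x y ≤ w x z + w z y)
    (σ : Equiv.Perm V) (hinv : ∀ x, σ (σ x) = x) (hfix : ∀ x, σ x ≠ x) :
    (∑ x, w x (σ x)) / 2
      ≤ (2 / (N : ℝ)) * ((∑ p ∈ (Finset.univ : Finset V).offDiag, w p.1 p.2) / 2) ∧
    (∑ x, w x (σ x)) / 2
      ≤ 2 * ((∑ τ ∈ Finset.univ.filter
                (fun τ : Equiv.Perm V => (∀ v, τ (τ v) = v) ∧ ∀ v, τ v ≠ v),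
              (∑ x, w x (τ x)) / 2)
            / ((Finset.univ.filter
                (fun τ : Equiv.Perm V => (∀ v, τ (τ v) = v) ∧ ∀ v, τ v ≠ v)).card : ℝ)) := by
  classical
  set S : ℝ := ∑ x, w x (σ x) with hS
  set T : ℝ := ∑ p ∈ (Finset.univ : Finset V).offDiag, w p.1 p.2 with hT
  -- empty case
  rcases Nat.eq_zero_or_pos N with hN0 | hNpos
  · subst hN0
    have : IsEmpty V := Fintype.card_eq_zero_iff.mp hN
    have hS0 : S = 0 := by simp [hS]
    have hT0 : T = 0 := by
      have h : (Finset.univ : Finset V).offDiag = ∅ := by simp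
      simp [hT, h]
    constructor
    · rw [hS0, hT0]; norm_num
    · rw [hS0]
      have h : ∀ τ ∈ Finset.univ.filter
          (fun τ : Equiv.Perm V => (∀ v, τ (τ v) = v) ∧ ∀ v, τ v ≠ v),
          (∑ x, w x (τ x)) / 2 = 0 := by
        intro τ _; simp
      rw [Finset.sum_congr rfl h]
      simp
  have hN2 : 2 ≤ N := by obtain ⟨r, hr⟩ := heven; omega
  -- T as a double sum
  have hTd : T = ∑ x, ∑ y ∈ Finset.univ.erase x, w x y := by
    rw [hT, (by ext a; simp [Finset.mem_offDiag] : (Finset.univ : Finset V).offDiag = (Finset.univ ×ˢ Finset.univ).filter (fun a : V × V => a.1 ≠ a.2)), Finset.sum_filter, Finset.sum_product]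
    refine Finset.sum_congr rfl fun x _ => ?_
    rw [← Finset.sum_filter, Finset.filter_ne]
  have hTnonneg : 0 ≤ T := by
    rw [hTd]
    exact Finset.sum_nonneg fun x _ => Finset.sum_nonneg fun y _ => hnonneg x y
  -- Key inequality: N * S ≤ 2 * T
  have hkey : (N : ℝ) * S ≤ 2 * T := by
    have hx : ∀ x : V, (N : ℝ) * w x (σ x) ≤
        (∑ z ∈ Finset.univ.erase x, w x z) +
        (∑ z ∈ Finset.univ.erase (σ x), w z (σ x)) := by
      intro x
      have hmemx : σ x ∈ Finset.univ.erase x := by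
        simp [Finset.mem_erase, hfix x]
      have hmemσ : x ∈ Finset.univ.erase (σ x) := by
        simp [Finset.mem_erase, (hfix x).symm, Ne.symm (hfix x)]
      have e1 : (∑ z ∈ Finset.univ.erase x, w x z)
          = w x (σ x) + ∑ z ∈ (Finset.univ.erase x).erase (σ x), w x z :=
        (Finset.add_sum_erase _ _ hmemx).symm
      have e2 : (∑ z ∈ Finset.univ.erase (σ x), w z (σ x))
          = w x (σ x) + ∑ z ∈ (Finset.univ.erase (σ x)).erase x, w z (σ x) :=
        (Finset.add_sum_erase _ _ hmemσ).symm
      have ecomm : (Finset.univ.erase (σ x)).erase x = (Finset.univ.erase x).erase (σ x) := by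
        ext z; simp only [Finset.mem_erase, Finset.mem_univ, and_true]; tauto
      set C := (Finset.univ.erase x).erase (σ x) with hC
      have hcardC : C.card = N - 2 := by
        rw [hC, Finset.card_erase_of_mem hmemx, Finset.card_erase_of_mem (Finset.mem_univ x),
          Finset.card_univ, hN]
        omega
      have htri : (∑ z ∈ C, w x (σ x)) ≤ (∑ z ∈ C, w x z) + (∑ z ∈ C, w z (σ x)) := by
        rw [← Finset.sum_add_distrib]
        refine Finset.sum_le_sum fun z hz => ?_
        have hz1 : z ≠ σ x := (Finset.mem_erase.mp hz).1
        have hz2 : z ≠ x := (Finset.mem_erase.mp (Finset.mem_erase.mp hz).2).1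
        exact hmetric x (σ x) z (hfix x).symm (Ne.symm hz1) (Ne.symm hz2)
      have hconst : (∑ z ∈ C, w x (σ x)) = ((N : ℝ) - 2) * w x (σ x) := by
        rw [Finset.sum_const, hcardC, nsmul_eq_mul]
        have h2 : ((N - 2 : ℕ) : ℝ) = (N : ℝ) - 2 := by
          have := Nat.cast_sub (R := ℝ) hN2; simpa using this
        rw [h2]
      rw [e1, e2, ecomm]
      have := htri
      rw [hconst] at this
      linarith
    calc (N : ℝ) * S = ∑ x, (N : ℝ) * w x (σ x) := by rw [hS, Finset.mul_sum]
      _ ≤ ∑ x, ((∑ z ∈ Finset.univ.erase x, w x z) + (∑ z ∈ Finset.univ.erase (σ x), w z (σ x))) :=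
          Finset.sum_le_sum fun x _ => hx x
      _ = (∑ x, ∑ z ∈ Finset.univ.erase x, w x z) + (∑ x, ∑ z ∈ Finset.univ.erase (σ x), w z (σ x)) :=
          Finset.sum_add_distrib
      _ = T + T := by
          rw [hTd]
          congr 1
          rw [Equiv.sum_comp σ (fun y => ∑ z ∈ Finset.univ.erase y, w z y)]
          exact Finset.sum_congr rfl fun x _ => Finset.sum_congr rfl fun z _ => hsymm z x
      _ = 2 * T := by ring
  constructor
  · -- first goal: S / 2 ≤ (2/N) * (T/2)
    rw [div_mul_div_comm]
    rw [div_le_div_iff₀ (by norm_num) (by positivity)]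
    push_cast
    nlinarith [hkey, Nat.one_le_iff_ne_zero.mpr (by omega : N ≠ 0)]
  · -- second goal
    set s : Finset (Equiv.Perm V) := Finset.univ.filter
        (fun τ : Equiv.Perm V => (∀ v, τ (τ v) = v) ∧ ∀ v, τ v ≠ v) with hs
    have hσs : σ ∈ s := by
      rw [hs, Finset.mem_filter]
      exact ⟨Finset.mem_univ σ, hinv, hfix⟩
    have hscard : 0 < s.card := Finset.card_pos.mpr ⟨σ, hσs⟩
    -- conjugation preserves membership in s
    have hconj : ∀ (τ : Equiv.Perm V) (a b : V), τ ∈ s →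
        (Equiv.swap a b * τ * Equiv.swap a b) ∈ s := by
      intro τ a b hτ
      rw [hs, Finset.mem_filter] at hτ ⊢
      obtain ⟨-, h1, h2⟩ := hτ
      refine ⟨Finset.mem_univ _, fun v => ?_, fun v hv => ?_⟩
      · simp [Equiv.Perm.mul_apply, Equiv.swap_apply_self, h1]
      · simp only [Equiv.Perm.mul_apply] at hv
        apply h2 (Equiv.swap a b v)
        have := congrArg (Equiv.swap a b) hv
        simpa [Equiv.swap_apply_self] using this
    -- all fibers over y ≠ x have the same cardinality
    have hfib : ∀ (x y y' : V), y ≠ x → y' ≠ x →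
        (s.filter (fun τ => τ x = y)).card = (s.filter (fun τ => τ x = y')).card := by
      intro x y y' hy hy'
      rcases eq_or_ne y y' with rfl | hyy'
      · rfl
      refine Finset.card_bij' (fun τ _ => Equiv.swap y y' * τ * Equiv.swap y y')
        (fun τ _ => Equiv.swap y y' * τ * Equiv.swap y y') ?_ ?_ ?_ ?_
      · intro τ hτ
        rw [Finset.mem_filter] at hτ ⊢
        refine ⟨hconj τ y y' hτ.1, ?_⟩
        have hx1 : Equiv.swap y y' x = x :=
          Equiv.swap_apply_of_ne_of_ne (Ne.symm hy) (Ne.symm hy')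
        simp [Equiv.Perm.mul_apply, hx1, hτ.2, Equiv.swap_apply_left]
      · intro τ hτ
        rw [Finset.mem_filter] at hτ ⊢
        refine ⟨hconj τ y y' hτ.1, ?_⟩
        have hx1 : Equiv.swap y y' x = x :=
          Equiv.swap_apply_of_ne_of_ne (Ne.symm hy) (Ne.symm hy')
        simp [Equiv.Perm.mul_apply, hx1, hτ.2, Equiv.swap_apply_right]
      · intro τ _
        ext v
        simp [Equiv.Perm.mul_apply, Equiv.swap_apply_self]
      · intro τ _
        ext v
        simp [Equiv.Perm.mul_apply, Equiv.swap_apply_self]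
    -- each τ ∈ s maps x into univ.erase x
    have hmaps : ∀ x : V, ∀ τ ∈ s, τ x ∈ Finset.univ.erase x := by
      intro x τ hτ
      rw [hs, Finset.mem_filter] at hτ
      exact Finset.mem_erase.mpr ⟨hτ.2.2 x, Finset.mem_univ _⟩
    -- the fiber cardinality in terms of s.card
    have hfibcard : ∀ (x y : V), y ≠ x →
        ((s.filter (fun τ => τ x = y)).card : ℝ) = (s.card : ℝ) / ((N : ℝ) - 1) := by
      intro x y hy
      have hsum : s.card = ∑ y' ∈ Finset.univ.erase x, (s.filter (fun τ => τ x = y')).card :=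
        Finset.card_eq_sum_card_fiberwise (hmaps x)
      have hconst : ∀ y' ∈ Finset.univ.erase x,
          (s.filter (fun τ => τ x = y')).card = (s.filter (fun τ => τ x = y)).card := by
        intro y' hy'
        exact hfib x y' y (Finset.mem_erase.mp hy').1 hy
      rw [Finset.sum_congr rfl hconst, Finset.sum_const, smul_eq_mul,
        Finset.card_erase_of_mem (Finset.mem_univ x), Finset.card_univ, hN] at hsum
      have hN1 : ((N - 1 : ℕ) : ℝ) = (N : ℝ) - 1 := by
        have := Nat.cast_sub (R := ℝ) (by omega : 1 ≤ N); simpa using this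
      have hne : (N : ℝ) - 1 ≠ 0 := by
        have : (2 : ℝ) ≤ (N : ℝ) := by exact_mod_cast hN2
        linarith
      have hsumR : (s.card : ℝ) = ((N : ℝ) - 1) * ((s.filter (fun τ => τ x = y)).card : ℝ) := by
        rw [← hN1]; exact_mod_cast hsum
      rw [hsumR, mul_div_cancel_left₀ _ hne]
    -- total weight over all matchings
    have htot : (∑ τ ∈ s, ∑ x, w x (τ x)) = (s.card : ℝ) / ((N : ℝ) - 1) * T := by
      rw [Finset.sum_comm]
      have hx1 : ∀ x : V, (∑ τ ∈ s, w x (τ x))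
          = (s.card : ℝ) / ((N : ℝ) - 1) * ∑ y ∈ Finset.univ.erase x, w x y := by
        intro x
        rw [← Finset.sum_fiberwise_of_maps_to (hmaps x) (fun τ => w x (τ x))]
        rw [Finset.mul_sum]
        refine Finset.sum_congr rfl fun y hy => ?_
        have : ∀ τ ∈ s.filter (fun τ => τ x = y), w x (τ x) = w x y := by
          intro τ hτ
          rw [(Finset.mem_filter.mp hτ).2]
        rw [Finset.sum_congr rfl this, Finset.sum_const, nsmul_eq_mul,
          hfibcard x y (Finset.mem_erase.mp hy).1]
      rw [Finset.sum_congr rfl (fun x _ => hx1 x), ← Finset.mul_sum, hTd]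
    -- compute the average
    have havg : (∑ τ ∈ s, (∑ x, w x (τ x)) / 2) / (s.card : ℝ) = T / (2 * ((N : ℝ) - 1)) := by
      rw [← Finset.sum_div, htot]
      have hsne : (s.card : ℝ) ≠ 0 := by positivity
      have hne : (N : ℝ) - 1 ≠ 0 := by
        have : (2 : ℝ) ≤ (N : ℝ) := by exact_mod_cast hN2
        linarith
      field_simp
    rw [havg]
    have hNR : (2 : ℝ) ≤ (N : ℝ) := by exact_mod_cast hN2
    have hSnn : 0 ≤ S := Finset.sum_nonneg fun x _ => hnonneg _ _
    have hpos : (0:ℝ) < (N : ℝ) - 1 := by linarith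
    have key2 : S * ((N : ℝ) - 1) ≤ 2 * T := by nlinarith [hkey, hSnn]
    calc S / 2 ≤ T / ((N : ℝ) - 1) := by
          rw [div_le_div_iff₀ (by norm_num) hpos]; nlinarith
      _ = 2 * (T / (2 * ((N : ℝ) - 1))) := by
          field_simp
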